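/- Let H be a 3-hypergraph whose line graph L(H) is 18-connected and has minimum degree at least 52. Let T be the set of vertices of H incident with at least 18 hyperedges (viewed as black vertices of the incidence graph IG(H)). Then T is 18-edge-connected in IG(H). -/

import Mathlib

open SimpleGraph

/-- The line graph of a hypergraph given by hyperedges `He : E → Finset V`:
vertices are hyperedges, two adjacent iff distinct and intersecting. -/
def hLineGraph {V E : Type} (He : E → Finset V) : SimpleGraph E where
  Adj e f := e ≠ f ∧ ∃ v, v ∈ He e ∧ v ∈ He f
  symm := ⟨by rintro e f ⟨h, v, h1, h2⟩; exact ⟨h.symm, v, h2, h1⟩⟩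
  loopless := ⟨by rintro e ⟨h, _⟩; exact h rfl⟩

/-- The incidence graph of a hypergraph: bipartite on `V ⊕ E`, with
`inl v` (black) adjacent to `inr e` (white) iff `v ∈ e`. -/
def incGraph {V E : Type} (He : E → Finset V) : SimpleGraph (V ⊕ E) where
  Adj x y := (∃ v e, x = Sum.inl v ∧ y = Sum.inr e ∧ v ∈ He e) ∨
             (∃ v e, x = Sum.inr e ∧ y = Sum.inl v ∧ v ∈ He e)
  symm := by constructor; rintro x y (⟨v, e, h1, h2, h3⟩ | ⟨v, e, h1, h2, h3⟩)
             · exact Or.inr ⟨v, e, h2, h1, h3⟩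
             · exact Or.inl ⟨v, e, h2, h1, h3⟩
  loopless := ⟨by rintro x (⟨v, e, h1, h2, _⟩ | ⟨v, e, h1, h2, _⟩) <;> simp_all⟩

/-- `T` is `k`-edge-connected in `G`: any two vertices of `T` are joined by
`k` pairwise edge-disjoint paths. -/
def EdgeConnectedIn {V : Type} (G : SimpleGraph V) (T : Set V) (k : ℕ) : Prop :=
  ∀ s₁ ∈ T, ∀ s₂ ∈ T, ∃ p : Fin k → G.Walk s₁ s₂,
    (∀ i, (p i).IsPath) ∧ ∀ i j, i ≠ j → ∀ e, e ∈ (p i).edges → e ∉ (p j).edges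

/-- `G` is `k`-connected: more than `k` vertices, and removing fewer than `k`
vertices leaves a connected graph. -/
def IsKConnected {V : Type} (G : SimpleGraph V) (k : ℕ) : Prop :=
  k < Nat.card V ∧ ∀ S : Set V, S.ncard < k → (G.induce (Sᶜ : Set V)).Connected

/-- A `T`-connector: a family of pairwise edge-disjoint `T`-paths (endpoints in `T`,
internal vertices outside `T`) such that short-cutting all of them yields a graph whose
induced subgraph on `T` is connected. -/
structure TConnector {V : Type} (G : SimpleGraph V) (T : Set V) where
  ι : Type
  finite : Finite ι
  a : ι → V
  b : ι → V
  walk : (i : ι) → G.Walk (a i) (b i)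
  isPath : ∀ i, (walk i).IsPath
  a_mem : ∀ i, a i ∈ T
  b_mem : ∀ i, b i ∈ T
  internal : ∀ i v, v ∈ (walk i).support → v ∈ T → v = a i ∨ v = b i
  edgeDisj : ∀ i j, i ≠ j → ∀ e, e ∈ (walk i).edges → e ∉ (walk j).edges
  shortcut_conn :
    ((SimpleGraph.fromEdgeSet (⋃ i, {s(a i, b i)})).induce T).Connected

/-- The edge set of a `T`-connector (the union of the edges of its paths). -/
def TConnector.edgeSet {V : Type} {G : SimpleGraph V} {T : Set V}
    (C : TConnector G T) : Set (Sym2 V) :=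
  ⋃ i, {e | e ∈ (C.walk i).edges}

/-- The `T`-connector viewed as a graph (the union of its paths). -/
def TConnector.graph {V : Type} {G : SimpleGraph V} {T : Set V}
    (C : TConnector G T) : SimpleGraph V :=
  SimpleGraph.fromEdgeSet C.edgeSet

/-- A closed `W`-quasitrail: a closed walk traversing each edge at most twice such
that every doubly-traversed edge `e` has an endpoint `w ∈ W` visited exactly once
whose predecessor and successor edges both equal `e`. -/
def IsClosedQuasitrail {V : Type} [DecidableEq V] (G : SimpleGraph V) (W : Set V)
    {x : V} (p : G.Walk x x) : Prop :=
  (∀ e, p.edges.count e ≤ 2) ∧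
  ∀ e, p.edges.count e = 2 →
    ∃ w u, w ∈ W ∧ e = s(u, w) ∧ p.support.tail.count w = 1 ∧
      ∃ d₁ d₂ : G.Dart, d₁.toProd = (u, w) ∧ d₂.toProd = (w, u) ∧
        [d₁, d₂] <:+: (p.darts ++ p.darts)


section MengerAux
set_option linter.unusedSectionVars false
set_option linter.unusedVariables false
set_option maxHeartbeats 1000000
variable {V : Type} [Fintype V] [DecidableEq V]








/-- `S` separates `A` from `B` in `G`: every `A`–`B` walk meets `S`. -/
def MSep (G : SimpleGraph V) (A B S : Finset V) : Prop :=
  ∀ a ∈ A, ∀ b ∈ B, ∀ p : G.Walk a b, ∃ s ∈ S, s ∈ p.support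

lemma MSep.symm {G : SimpleGraph V} {A B S : Finset V} (h : MSep G A B S) :
    MSep G B A S := by
  intro b hb a ha p
  obtain ⟨s, hs, hsp⟩ := h a ha b hb p.reverse
  exact ⟨s, hs, by simpa using hsp⟩

/-- Truncate a walk at its first vertex belonging to `S`. -/
lemma takeUntilSet {G : SimpleGraph V} {a b : V} (S : Finset V) (p : G.Walk a b)
    (hmeet : ∃ s ∈ S, s ∈ p.support) :
    ∃ (c : V) (q : G.Walk a c), c ∈ S ∧ (∀ v ∈ q.support, v ∈ S → v = c) ∧
      q.support <+: p.support ∧ q.edges <+: p.edges := by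
  induction p with
  | nil =>
    obtain ⟨s, hsS, hs⟩ := hmeet
    simp only [Walk.support_nil, List.mem_singleton] at hs
    subst hs
    exact ⟨s, Walk.nil, hsS, by simp, by simp, by simp⟩
  | @cons u v w h p ih =>
    by_cases hu : u ∈ S
    · refine ⟨u, Walk.nil, hu, by simp, ?_, by simp⟩
      rw [Walk.support_nil, Walk.support_cons]
      exact ⟨p.support, rfl⟩
    · have hmeet' : ∃ s ∈ S, s ∈ p.support := by
        obtain ⟨s, hsS, hs⟩ := hmeet
        rw [Walk.support_cons, List.mem_cons] at hs
        rcases hs with rfl | hs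
        · exact absurd hsS hu
        · exact ⟨s, hsS, hs⟩
      obtain ⟨c, q, hcS, hint, hpre, hepre⟩ := ih hmeet'
      refine ⟨c, Walk.cons h q, hcS, ?_, ?_, ?_⟩
      · intro x hx hxS
        rw [Walk.support_cons, List.mem_cons] at hx
        rcases hx with rfl | hx
        · exact absurd hxS hu
        · exact hint x hx hxS
      · rw [Walk.support_cons, Walk.support_cons]
        exact (List.cons_prefix_cons).2 ⟨rfl, hpre⟩
      · rw [Walk.edges_cons, Walk.edges_cons]
        exact (List.cons_prefix_cons).2 ⟨rfl, hepre⟩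

/-- crossing lemma: a common vertex of an `A`–`S` path meeting `S` only at its end
and an `S`–`B` path meeting `S` only at its start must lie in `S`. -/
lemma crossing {G : SimpleGraph V} {A B S : Finset V} (hsep : MSep G A B S)
    {a e s b v : V} (p : G.Walk a e) (q : G.Walk s b)
    (haA : a ∈ A) (hbB : b ∈ B) (heS : e ∈ S) (hsS : s ∈ S)
    (hp : p.IsPath) (hq : q.IsPath)
    (hpint : ∀ x ∈ p.support, x ∈ S → x = e)
    (hqint : ∀ x ∈ q.support, x ∈ S → x = s)
    (hv1 : v ∈ p.support) (hv2 : v ∈ q.support) : v ∈ S := by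
  by_contra hvS
  have hve : v ≠ e := fun h => hvS (h ▸ heS)
  have hvs : v ≠ s := fun h => hvS (h ▸ hsS)
  set t := p.takeUntil v hv1 with ht
  set d := q.dropUntil v hv2 with hd
  obtain ⟨x, hxS, hxw⟩ := hsep a haA b hbB (t.append d)
  rw [Walk.support_append, List.mem_append] at hxw
  -- facts about p's decomposition
  have hpspec : (p.takeUntil v hv1).append (p.dropUntil v hv1) = p := Walk.take_spec p hv1
  have hpnodup : ((p.takeUntil v hv1).support ++ (p.dropUntil v hv1).support.tail).Nodup := by
    rw [← Walk.support_append, hpspec]; exact hp.support_nodup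
  have hpdisj := List.disjoint_of_nodup_append hpnodup
  have hqspec : (q.takeUntil v hv2).append (q.dropUntil v hv2) = q := Walk.take_spec q hv2
  have hqnodup : ((q.takeUntil v hv2).support ++ (q.dropUntil v hv2).support.tail).Nodup := by
    rw [← Walk.support_append, hqspec]; exact hq.support_nodup
  have hqdisj := List.disjoint_of_nodup_append hqnodup
  rcases hxw with hx | hx
  · -- x on the take-part of p
    have hxp : x ∈ p.support := Walk.support_takeUntil_subset p hv1 hx
    have hxe : x = e := hpint x hxp hxS
    subst hxe
    -- but e is in the tail of the drop part of p
    have h1 : x ∈ (p.dropUntil v hv1).support := Walk.end_mem_support _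
    have h2 : x ∈ (p.dropUntil v hv1).support.tail := by
      have := Walk.support_eq_cons (p.dropUntil v hv1)
      rw [this] at h1
      rcases List.mem_cons.1 h1 with h | h
      · exact absurd h.symm hve
      · exact h
    exact hpdisj hx h2
  · -- x in tail of drop-part of q
    have hxq : x ∈ q.support := Walk.support_dropUntil_subset q hv2 (List.mem_of_mem_tail hx)
    have hxs : x = s := hqint x hxq hxS
    subst hxs
    have h1 : x ∈ (q.takeUntil v hv2).support := by
      have := Walk.start_mem_support (q.takeUntil v hv2); exact this
    exact hqdisj h1 hx

/-- Gluing two truncated disjoint path systems across a separator of size `k`. -/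
lemma glue {G : SimpleGraph V} {A B S : Finset V} {k : ℕ} (hcard : S.card = k)
    (hsep : MSep G A B S)
    (pa pe : Fin k → V) (P : ∀ i, G.Walk (pa i) (pe i))
    (hpaA : ∀ i, pa i ∈ A) (hpeS : ∀ i, pe i ∈ S)
    (hPpath : ∀ i, (P i).IsPath)
    (hPint : ∀ i, ∀ v ∈ (P i).support, v ∈ S → v = pe i)
    (hPdisj : ∀ i j, i ≠ j → ∀ v, v ∈ (P i).support → v ∉ (P j).support)
    (qa qb : Fin k → V) (Q : ∀ i, G.Walk (qa i) (qb i))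
    (hqaS : ∀ i, qa i ∈ S) (hqbB : ∀ i, qb i ∈ B)
    (hQpath : ∀ i, (Q i).IsPath)
    (hQint : ∀ i, ∀ v ∈ (Q i).support, v ∈ S → v = qa i)
    (hQdisj : ∀ i j, i ≠ j → ∀ v, v ∈ (Q i).support → v ∉ (Q j).support) :
    ∃ (a b : Fin k → V) (w : ∀ i, G.Walk (a i) (b i)),
      (∀ i, a i ∈ A) ∧ (∀ i, b i ∈ B) ∧ (∀ i, (w i).IsPath) ∧
      (∀ i j, i ≠ j → ∀ v, v ∈ (w i).support → v ∉ (w j).support) := by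
  have hpeinj : Function.Injective pe := by
    intro i j hij
    by_contra hne
    refine hPdisj i j hne (pe i) (Walk.end_mem_support _) ?_
    rw [hij]; exact Walk.end_mem_support _
  have hqainj : Function.Injective qa := by
    intro i j hij
    by_contra hne
    refine hQdisj i j hne (qa i) (Walk.start_mem_support _) ?_
    rw [hij]; exact Walk.start_mem_support _
  have hcardS : Fintype.card {x // x ∈ S} = Fintype.card (Fin k) := by
    simp [hcard]
  have hfbij : Function.Bijective (fun i => (⟨pe i, hpeS i⟩ : {x // x ∈ S})) :=
    (Fintype.bijective_iff_injective_and_card _).2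
      ⟨fun i j h => hpeinj (congrArg Subtype.val h), hcardS.symm⟩
  have hgbij : Function.Bijective (fun i => (⟨qa i, hqaS i⟩ : {x // x ∈ S})) :=
    (Fintype.bijective_iff_injective_and_card _).2
      ⟨fun i j h => hqainj (congrArg Subtype.val h), hcardS.symm⟩
  let eg := Equiv.ofBijective _ hgbij
  let σ : Fin k → Fin k := fun i => eg.symm ⟨pe i, hpeS i⟩
  have hσ : ∀ i, qa (σ i) = pe i := by
    intro i
    have : eg (eg.symm ⟨pe i, hpeS i⟩) = ⟨pe i, hpeS i⟩ := eg.apply_symm_apply _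
    exact congrArg Subtype.val this
  have hσinj : Function.Injective σ := by
    intro i j h
    apply hpeinj
    have := congrArg eg h
    replace this := (eg.apply_symm_apply ⟨pe i, hpeS i⟩).symm.trans
      (this.trans (eg.apply_symm_apply ⟨pe j, hpeS j⟩))
    exact congrArg Subtype.val this
  -- the crossing specialization
  have hcross : ∀ i j v, v ∈ (P i).support → v ∈ (Q j).support → v ∈ S := fun i j v h1 h2 =>
    crossing hsep (P i) (Q j) (hpaA i) (hqbB j) (hpeS i) (hqaS j)
      (hPpath i) (hQpath j) (hPint i) (hQint j) h1 h2
  refine ⟨pa, fun i => qb (σ i),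
    fun i => (P i).append (((Q (σ i)).copy (hσ i) rfl)), hpaA, fun i => hqbB _, ?_, ?_⟩
  · intro i
    rw [Walk.isPath_def, Walk.support_append, Walk.support_copy]
    refine List.Nodup.append (hPpath i).support_nodup
      ((hQpath (σ i)).support_nodup.sublist (List.tail_sublist _)) ?_
    intro x hx1 hx2
    have hx2' : x ∈ (Q (σ i)).support := List.mem_of_mem_tail hx2
    have hxS : x ∈ S := hcross i (σ i) x hx1 hx2'
    have hxe : x = pe i := hPint i x hx1 hxS
    have hxa : x = qa (σ i) := hQint (σ i) x hx2' hxS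
    -- qa (σ i) is the head of Q (σ i), so not in the tail
    have hnd := (hQpath (σ i)).support_nodup
    rw [Walk.support_eq_cons] at hnd
    exact (List.nodup_cons.1 hnd).1 (hxa ▸ hx2)
  · intro i j hij v hvi hvj
    rw [Walk.support_append, List.mem_append, Walk.support_copy] at hvi hvj
    have hvi' : v ∈ (P i).support ∨ v ∈ (Q (σ i)).support :=
      hvi.imp id List.mem_of_mem_tail
    have hvj' : v ∈ (P j).support ∨ v ∈ (Q (σ j)).support :=
      hvj.imp id List.mem_of_mem_tail
    rcases hvi' with h1 | h1 <;> rcases hvj' with h2 | h2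
    · exact hPdisj i j hij v h1 h2
    · have hvS := hcross i (σ j) v h1 h2
      have e1 := hPint i v h1 hvS
      have e2 := hQint (σ j) v h2 hvS
      have : pe i = pe j := by rw [← e1, e2, hσ j]
      exact hij (hpeinj this)
    · have hvS := hcross j (σ i) v h2 h1
      have e1 := hPint j v h2 hvS
      have e2 := hQint (σ i) v h1 hvS
      have : pe j = pe i := by rw [← e1, e2, hσ i]
      exact hij (hpeinj this.symm)
    · have hσne : σ i ≠ σ j := fun h => hij (hσinj h)
      exact hQdisj (σ i) (σ j) hσne v h1 h2
/-- The contraction map identifying `y` with `x`. -/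
def cmap (x y : V) : V → V := fun z => if z = y then x else z

lemma cmap_x (x y : V) : cmap x y x = if x = y then x else x := rfl

lemma cmap_apply (x y z : V) : cmap x y z = if z = y then x else z := rfl

lemma cmap_cases (x y z : V) : cmap x y z = z ∨ (z = y ∧ cmap x y z = x) := by
  by_cases h : z = y
  · exact Or.inr ⟨h, by simp [cmap, h]⟩
  · exact Or.inl (by simp [cmap, h])

lemma cmap_inj_cases {x y u v : V} (hxy : x ≠ y) (h : cmap x y u = cmap x y v) :
    u = v ∨ (u = x ∧ v = y) ∨ (u = y ∧ v = x) := by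
  simp only [cmap] at h
  by_cases hu : u = y <;> by_cases hv : v = y
  · left; rw [hu, hv]
  · simp [hu, hv] at h; right; right; exact ⟨hu, h.symm⟩
  · simp [hu, hv] at h; right; left; exact ⟨h, hv⟩
  · simp [hu, hv] at h; left; exact h

/-- The graph obtained by contracting the pair `x, y` (identifying `y` with `x`). -/
def contractG (G : SimpleGraph V) (x y : V) : SimpleGraph V where
  Adj a b := a ≠ b ∧ ∃ u v, G.Adj u v ∧ cmap x y u = a ∧ cmap x y v = b
  symm := ⟨by rintro a b ⟨hne, u, v, huv, hu, hv⟩; exact ⟨hne.symm, v, u, huv.symm, hv, hu⟩⟩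
  loopless := ⟨by rintro a ⟨hne, _⟩; exact hne rfl⟩

/-- Pushing a walk forward along the contraction map. -/
lemma contract_walk {G : SimpleGraph V} {x y a b : V} (p : G.Walk a b) :
    ∃ q : (contractG G x y).Walk (cmap x y a) (cmap x y b),
      ∀ w ∈ q.support, ∃ z ∈ p.support, cmap x y z = w := by
  induction p with
  | nil => exact ⟨Walk.nil, by simp⟩
  | @cons u v w h p ih =>
    obtain ⟨q', hq'⟩ := ih
    by_cases hc : cmap x y u = cmap x y v
    · refine ⟨q'.copy hc.symm rfl, ?_⟩
      intro z hz
      rw [Walk.support_copy] at hz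
      obtain ⟨z', hz', hcz⟩ := hq' z hz
      exact ⟨z', by simp [hz'], hcz⟩
    · refine ⟨Walk.cons (show (contractG G x y).Adj _ _ from ⟨hc, u, v, h, rfl, rfl⟩) q', ?_⟩
      intro z hz
      rw [Walk.support_cons, List.mem_cons] at hz
      rcases hz with rfl | hz
      · exact ⟨u, by simp, rfl⟩
      · obtain ⟨z', hz', hcz⟩ := hq' z hz
        exact ⟨z', by simp [hz'], hcz⟩

/-- Lifting a walk of the contraction back to the original graph. -/
lemma contract_lift {G : SimpleGraph V} {x y : V} (hxy : G.Adj x y) {s t : V}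
    (p : (contractG G x y).Walk s t) :
    ∀ (s₀ : V), cmap x y s₀ = s →
      ∃ t₀ : V, cmap x y t₀ = t ∧ ∃ q : G.Walk s₀ t₀,
        ∀ v ∈ q.support, cmap x y v ∈ p.support := by
  induction p with
  | nil =>
    intro s₀ hs
    refine ⟨s₀, hs, Walk.nil, ?_⟩
    intro v hv
    rw [Walk.support_nil, List.mem_singleton] at hv
    subst hv
    rw [Walk.support_nil, List.mem_singleton]
    exact hs
  | @cons s m t h p ih =>
    intro s₀ hs
    obtain ⟨hne, u, w, huw, hcu, hcw⟩ := id h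
    obtain ⟨t₀, hct, q', hsupp⟩ := ih w hcw
    have hstep : ∃ first : G.Walk s₀ w, ∀ v ∈ first.support, v = s₀ ∨ v = u ∨ v = w := by
      by_cases he : s₀ = u
      · subst he
        exact ⟨Walk.cons huw Walk.nil, by intro v hv; simp at hv; tauto⟩
      · have hadj : G.Adj s₀ u := by
          rcases cmap_inj_cases hxy.ne (hs.trans hcu.symm) with h1 | ⟨h1, h2⟩ | ⟨h1, h2⟩
          · exact absurd h1 he
          · subst h1; subst h2; exact hxy
          · subst h1; subst h2; exact hxy.symm
        exact ⟨Walk.cons hadj (Walk.cons huw Walk.nil), by intro v hv; simp at hv; tauto⟩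
    obtain ⟨first, hfirst⟩ := hstep
    refine ⟨t₀, hct, first.append q', ?_⟩
    intro z hz
    rw [Walk.support_append, List.mem_append] at hz
    rw [Walk.support_cons, List.mem_cons]
    rcases hz with hz | hz
    · rcases hfirst z hz with rfl | rfl | rfl
      · exact Or.inl hs
      · exact Or.inl hcu
      · exact Or.inr (hcw ▸ Walk.start_mem_support p)
    · exact Or.inr (hsupp z (List.mem_of_mem_tail hz))

/-- Contraction strictly decreases the number of edges. -/
lemma contract_edges_lt {G : SimpleGraph V} {x y : V} (hxy : G.Adj x y) :
    (contractG G x y).edgeSet.ncard < G.edgeSet.ncard := by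
  have hsub : (contractG G x y).edgeSet ⊆ Sym2.map (cmap x y) '' (G.edgeSet \ {s(x, y)}) := by
    intro e he
    induction e with
    | h a b =>
      rw [mem_edgeSet] at he
      obtain ⟨hne, u, v, huv, hcu, hcv⟩ := he
      refine ⟨s(u, v), ⟨(mem_edgeSet G).2 huv, ?_⟩, by rw [Sym2.map_pair_eq, hcu, hcv]⟩
      simp only [Set.mem_singleton_iff, Sym2.eq_iff]
      rintro (⟨rfl, rfl⟩ | ⟨rfl, rfl⟩) <;> apply hne
      · rw [← hcu, ← hcv]; simp [cmap, hxy.ne]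
      · rw [← hcu, ← hcv]; simp [cmap, hxy.ne]
  calc (contractG G x y).edgeSet.ncard
      ≤ (Sym2.map (cmap x y) '' (G.edgeSet \ {s(x, y)})).ncard :=
        Set.ncard_le_ncard hsub (Set.toFinite _)
    _ ≤ (G.edgeSet \ {s(x, y)}).ncard := Set.ncard_image_le (Set.toFinite _)
    _ < G.edgeSet.ncard :=
        Set.ncard_diff_singleton_lt_of_mem ((mem_edgeSet G).2 hxy) (Set.toFinite _)

lemma delete_edges_lt {G : SimpleGraph V} {x y : V} (hxy : G.Adj x y) :
    (G.deleteEdges {s(x, y)}).edgeSet.ncard < G.edgeSet.ncard := by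
  rw [edgeSet_deleteEdges]
  exact Set.ncard_diff_singleton_lt_of_mem ((mem_edgeSet G).2 hxy) (Set.toFinite _)

/-- A system of `k` pairwise vertex-disjoint `A`–`B` paths. -/
def MSys (G : SimpleGraph V) (A B : Finset V) (k : ℕ) : Prop :=
  ∃ (a b : Fin k → V) (p : ∀ i, G.Walk (a i) (b i)),
    (∀ i, a i ∈ A) ∧ (∀ i, b i ∈ B) ∧ (∀ i, (p i).IsPath) ∧
    (∀ i j, i ≠ j → ∀ v, v ∈ (p i).support → v ∉ (p j).support)

lemma MSys.of_le {G H : SimpleGraph V} {A B : Finset V} {k : ℕ}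
    (hle : H.edgeSet ⊆ G.edgeSet) (h : MSys H A B k) : MSys G A B k := by
  obtain ⟨a, b, p, ha, hb, hpath, hdisj⟩ := h
  refine ⟨a, b, fun i => (p i).transfer G (fun e he => hle ((p i).edges_subset_edgeSet he)),
    ha, hb, fun i => (hpath i).transfer _, ?_⟩
  intro i j hij v hvi
  rw [Walk.support_transfer] at hvi ⊢
  exact hdisj i j hij v hvi

lemma menger_base {G : SimpleGraph V} {A B : Finset V} {k : ℕ}
    (hE : G.edgeSet = ∅)
    (hsep : ∀ S : Finset V, MSep G A B S → k ≤ S.card) : MSys G A B k := by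
  have hwalk : ∀ {a b : V} (p : G.Walk a b), a = b ∧ p.support = [a] := by
    intro a b p
    cases p with
    | nil => exact ⟨rfl, rfl⟩
    | cons h p =>
      exact absurd ((mem_edgeSet G).2 h) (by rw [hE]; exact Set.notMem_empty _)
  have hABsep : MSep G A B (A ∩ B) := by
    intro a ha b hb p
    obtain ⟨rfl, hsup⟩ := hwalk p
    exact ⟨a, Finset.mem_inter.2 ⟨ha, hb⟩, by rw [hsup]; simp⟩
  have hk : k ≤ (A ∩ B).card := hsep _ hABsep
  obtain ⟨C, hCsub, hCcard⟩ := Finset.exists_subset_card_eq (s := A ∩ B) hk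
  let f : Fin k → V := fun i => (C.equivFin.symm (Fin.cast hCcard.symm i)).1
  have hfinj : Function.Injective f := by
    intro i j hij
    have := C.equivFin.symm.injective (Subtype.val_injective hij)
    apply Fin.ext
    simpa [Fin.ext_iff] using this
  have hfC : ∀ i, f i ∈ C := fun i => (C.equivFin.symm (Fin.cast hCcard.symm i)).2
  refine ⟨f, f, fun _ => Walk.nil, fun i => (Finset.mem_inter.1 (hCsub (hfC i))).1,
    fun i => (Finset.mem_inter.1 (hCsub (hfC i))).2, fun i => by simp, ?_⟩
  intro i j hij v hvi hvj
  rw [Walk.support_nil, List.mem_singleton] at hvi hvj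
  exact hij (hfinj (hvi ▸ hvj ▸ rfl))

/-- Menger's theorem (set version): if every `A`–`B` separator has at least `k`
vertices, then there are `k` pairwise vertex-disjoint `A`–`B` paths. -/
theorem menger (k : ℕ) (n : ℕ) :
    ∀ (G : SimpleGraph V) (A B : Finset V), G.edgeSet.ncard ≤ n →
      (∀ S : Finset V, MSep G A B S → k ≤ S.card) → MSys G A B k := by
  induction n with
  | zero =>
    intro G A B hn hsep
    have hE : G.edgeSet = ∅ := by
      have := Set.ncard_eq_zero (Set.toFinite G.edgeSet)
      exact this.1 (Nat.le_zero.1 hn)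
    exact menger_base hE hsep
  | succ n IH =>
    intro G A B hn hsep
    by_cases hE0 : G.edgeSet.ncard = 0
    · exact menger_base ((Set.ncard_eq_zero (Set.toFinite _)).1 hE0) hsep
    obtain ⟨e, he⟩ := Set.nonempty_of_ncard_ne_zero hE0
    induction e using Sym2.ind with
    | _ x y =>
    have hxy : G.Adj x y := (mem_edgeSet G).1 he
    set C := contractG G x y with hC
    set A' := A.image (cmap x y) with hA'
    set B' := B.image (cmap x y) with hB'
    by_cases hgood : ∀ Y : Finset V, MSep C A' B' Y → k ≤ Y.card
    · -- good case: recurse on the contraction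
      have hnc : C.edgeSet.ncard ≤ n := by
        have := contract_edges_lt hxy
        rw [← hC] at this; omega
      obtain ⟨a', b', P', ha', hb', hpath', hdisj'⟩ := IH C A' B' hnc hgood
      have key : ∀ i, ∃ (aa bb : V) (w : G.Walk aa bb), aa ∈ A ∧ bb ∈ B ∧ w.IsPath ∧
          ∀ v ∈ w.support, cmap x y v ∈ (P' i).support := by
        intro i
        obtain ⟨s₀, hs₀A, hs₀c⟩ := Finset.mem_image.1 (ha' i)
        obtain ⟨t₀, hct, q, hq⟩ := contract_lift hxy (P' i) s₀ hs₀c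
        by_cases htB : t₀ ∈ B
        · refine ⟨s₀, t₀, q.bypass, hs₀A, htB, q.bypass_isPath, ?_⟩
          intro v hv
          exact hq v (q.support_bypass_subset hv)
        · obtain ⟨b₀, hb₀B, hb₀c⟩ := Finset.mem_image.1 (hb' i)
          have hne : t₀ ≠ b₀ := fun h => htB (h ▸ hb₀B)
          have hcc : cmap x y t₀ = cmap x y b₀ := by rw [hct, hb₀c]
          have hadj : G.Adj t₀ b₀ := by
            rcases cmap_inj_cases hxy.ne hcc with h1 | ⟨h1, h2⟩ | ⟨h1, h2⟩
            · exact absurd h1 hne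
            · rw [h1, h2]; exact hxy
            · rw [h1, h2]; exact hxy.symm
          refine ⟨s₀, b₀, (q.concat hadj).bypass, hs₀A, hb₀B, Walk.bypass_isPath _, ?_⟩
          intro v hv
          have := (q.concat hadj).support_bypass_subset hv
          rw [Walk.support_concat, List.mem_append,
            List.mem_singleton] at this
          rcases this with h | h
          · exact hq v h
          · have h2 := hq t₀ (Walk.end_mem_support q)
            rw [hct] at h2
            rw [h, hb₀c]
            exact h2
      choose aa bb w haA hbB hwpath hwsupp using key
      refine ⟨aa, bb, w, haA, hbB, hwpath, ?_⟩
      intro i j hij v hvi hvj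
      exact hdisj' i j hij (cmap x y v) (hwsupp i v hvi) (hwsupp j v hvj)
    · -- bad case
      push_neg at hgood
      obtain ⟨Y, hYsep, hYcard⟩ := hgood
      have hxY : x ∈ Y := by
        by_contra hxY
        have hYG : MSep G A B Y := by
          intro a ha b hb p
          obtain ⟨q, hq⟩ := contract_walk (x := x) (y := y) p
          obtain ⟨s, hsY, hsq⟩ := hYsep (cmap x y a) (Finset.mem_image_of_mem _ ha)
            (cmap x y b) (Finset.mem_image_of_mem _ hb) q
          obtain ⟨z, hz, hcz⟩ := hq s hsq
          rcases cmap_cases x y z with hcz' | ⟨hzy, hcz'⟩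
          · exact ⟨s, hsY, (hcz'.symm.trans hcz) ▸ hz⟩
          · have : s = x := by rw [← hcz, hcz']
            exact absurd (this ▸ hsY) hxY
        have := hsep Y hYG; omega
      have hS₀sep : MSep G A B (Y ∪ {y}) := by
        intro a ha b hb p
        obtain ⟨q, hq⟩ := contract_walk (x := x) (y := y) p
        obtain ⟨s, hsY, hsq⟩ := hYsep (cmap x y a) (Finset.mem_image_of_mem _ ha)
          (cmap x y b) (Finset.mem_image_of_mem _ hb) q
        obtain ⟨z, hz, hcz⟩ := hq s hsq
        rcases cmap_cases x y z with hcz' | ⟨hzy, hcz'⟩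
        · exact ⟨s, Finset.mem_union_left _ hsY, (hcz'.symm.trans hcz) ▸ hz⟩
        · exact ⟨z, by rw [hzy]; simp, hz⟩
      have hkV : k ≤ Fintype.card V := by
        have huniv : MSep G A B Finset.univ := by
          intro a ha b hb p
          exact ⟨a, Finset.mem_univ _, Walk.start_mem_support p⟩
        simpa using hsep _ huniv
      have hS₀card : (Y ∪ {y}).card ≤ k := by
        have h1 : (Y ∪ {y}).card ≤ Y.card + 1 := by
          have := Finset.card_union_le Y ({y} : Finset V)
          simpa using this
        omega
      obtain ⟨S, hSsub, -, hScard⟩ := Finset.exists_subsuperset_card_eq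
        (Finset.subset_univ (Y ∪ {y})) hS₀card (by simpa using hkV)
      have hSsep : MSep G A B S := by
        intro a ha b hb p
        obtain ⟨s, hs, hsp⟩ := hS₀sep a ha b hb p
        exact ⟨s, hSsub hs, hsp⟩
      have hxS : x ∈ S := hSsub (by simp [hxY])
      have hyS : y ∈ S := hSsub (by simp)
      set G₁ := G.deleteEdges {s(x, y)} with hG₁
      have hG₁n : G₁.edgeSet.ncard ≤ n := by
        have := delete_edges_lt hxy
        rw [← hG₁] at this; omega
      have hG₁le : G₁.edgeSet ⊆ G.edgeSet := by
        rw [hG₁, edgeSet_deleteEdges]; exact Set.diff_subset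
      -- transfer an initial segment of a G-walk into G₁
      have prefixfree : ∀ {a b : V} (p : G.Walk a b), (∃ s ∈ S, s ∈ p.support) →
          ∃ (c : V) (q : G₁.Walk a c), c ∈ S ∧ q.support <+: p.support := by
        intro a b p hmeet
        obtain ⟨c, q, hcS, hint, hpre, hepre⟩ := takeUntilSet S p hmeet
        have hef : ∀ f ∈ q.edges, f ∈ G₁.edgeSet := by
          intro f hf
          rw [hG₁, edgeSet_deleteEdges]
          refine ⟨q.edges_subset_edgeSet hf, ?_⟩
          simp only [Set.mem_singleton_iff]
          rintro rfl
          have hx' : x ∈ q.support := q.fst_mem_support_of_mem_edges hf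
          have hy' : y ∈ q.support := q.snd_mem_support_of_mem_edges hf
          have e1 : x = c := hint x hx' hxS
          have e2 : y = c := hint y hy' hyS
          exact hxy.ne (e1.trans e2.symm)
        refine ⟨c, q.transfer G₁ hef, hcS, ?_⟩
        rw [Walk.support_transfer]
        exact hpre
      have hsub1 : ∀ R : Finset V, MSep G₁ A S R → k ≤ R.card := by
        intro R hR
        apply hsep R
        intro a ha b hb p
        obtain ⟨c, q, hcS, hpre⟩ := prefixfree p (hSsep a ha b hb p)
        obtain ⟨r, hrR, hrq⟩ := hR a ha c hcS q
        exact ⟨r, hrR, hpre.subset hrq⟩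
      have hsub2 : ∀ R : Finset V, MSep G₁ B S R → k ≤ R.card := by
        intro R hR
        apply hsep R
        intro a ha b hb p
        obtain ⟨s, hsS, hsp⟩ := hSsep a ha b hb p
        have hsp' : s ∈ p.reverse.support := by rwa [Walk.support_reverse, List.mem_reverse]
        obtain ⟨c, q, hcS, hpre⟩ := prefixfree p.reverse ⟨s, hsS, hsp'⟩
        obtain ⟨r, hrR, hrq⟩ := hR b hb c hcS q
        have : r ∈ p.reverse.support := hpre.subset hrq
        rw [Walk.support_reverse, List.mem_reverse] at this
        exact ⟨r, hrR, this⟩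
      obtain ⟨a1, b1, p1, ha1, hb1, hpath1, hdisj1⟩ :=
        (IH G₁ A S hG₁n hsub1).of_le hG₁le
      obtain ⟨a2, b2, p2, ha2, hb2, hpath2, hdisj2⟩ :=
        (IH G₁ B S hG₁n hsub2).of_le hG₁le
      -- truncate both systems at their first S-vertex
      have trunc1 : ∀ i, ∃ (c : V) (q : G.Walk (a1 i) c), c ∈ S ∧
          (∀ v ∈ q.support, v ∈ S → v = c) ∧ q.support <+: (p1 i).support :=
        fun i => by
          obtain ⟨c, q, h1, h2, h3, _⟩ :=
            takeUntilSet S (p1 i) ⟨b1 i, hb1 i, Walk.end_mem_support _⟩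
          exact ⟨c, q, h1, h2, h3⟩
      have trunc2 : ∀ i, ∃ (c : V) (q : G.Walk (a2 i) c), c ∈ S ∧
          (∀ v ∈ q.support, v ∈ S → v = c) ∧ q.support <+: (p2 i).support :=
        fun i => by
          obtain ⟨c, q, h1, h2, h3, _⟩ :=
            takeUntilSet S (p2 i) ⟨b2 i, hb2 i, Walk.end_mem_support _⟩
          exact ⟨c, q, h1, h2, h3⟩
      choose c1 q1 hc1S hint1 hpre1 using trunc1
      choose c2 q2 hc2S hint2 hpre2 using trunc2
      have hq1path : ∀ i, (q1 i).IsPath := fun i => by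
        rw [Walk.isPath_def]
        exact List.Nodup.sublist (hpre1 i).sublist ((Walk.isPath_def _).1 (hpath1 i))
      have hq2path : ∀ i, (q2 i).IsPath := fun i => by
        rw [Walk.isPath_def]
        exact List.Nodup.sublist (hpre2 i).sublist ((Walk.isPath_def _).1 (hpath2 i))
      have hq1disj : ∀ i j, i ≠ j → ∀ v, v ∈ (q1 i).support → v ∉ (q1 j).support :=
        fun i j hij v hvi hvj =>
          hdisj1 i j hij v ((hpre1 i).subset hvi) ((hpre1 j).subset hvj)
      have hq2disj : ∀ i j, i ≠ j → ∀ v, v ∈ (q2 i).support → v ∉ (q2 j).support :=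
        fun i j hij v hvi hvj =>
          hdisj2 i j hij v ((hpre2 i).subset hvi) ((hpre2 j).subset hvj)
      -- apply the gluing lemma with reversed second system
      exact glue hScard hSsep a1 c1 q1 ha1 hc1S hq1path hint1 hq1disj
        c2 a2 (fun i => (q2 i).reverse) hc2S ha2
        (fun i => (Walk.isPath_reverse_iff _).2 (hq2path i))
        (fun i v hv hvS => hint2 i v (by rwa [Walk.support_reverse, List.mem_reverse] at hv) hvS)
        (fun i j hij v hvi hvj => hq2disj i j hij v
          (by rwa [Walk.support_reverse, List.mem_reverse] at hvi)
          (by rwa [Walk.support_reverse, List.mem_reverse] at hvj))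

theorem menger' (k : ℕ) (G : SimpleGraph V) (A B : Finset V)
    (hsep : ∀ S : Finset V, MSep G A B S → k ≤ S.card) : MSys G A B k :=
  menger k (G.edgeSet.ncard) G A B le_rfl hsep

end MengerAux

/-- Walks in an induced subgraph give walks in the ambient graph staying in the set. -/
lemma induce_walk_out {E : Type} {L : SimpleGraph E} {s : Set E} {x y : s}
    (w : (L.induce s).Walk x y) :
    ∃ p : L.Walk x.1 y.1, ∀ z ∈ p.support, z ∈ s := by
  induction w with
  | nil => exact ⟨Walk.nil, by simp⟩
  | @cons a m c h w ih =>
    obtain ⟨p, hp⟩ := ih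
    have hadj : L.Adj a.1 m.1 := h
    refine ⟨Walk.cons hadj p, ?_⟩
    intro z hz
    rw [Walk.support_cons, List.mem_cons] at hz
    rcases hz with rfl | hz
    · exact a.2
    · exact hp z hz

/-- Lifting a line-graph walk to an incidence-graph walk. -/
lemma line_to_inc {V E : Type} {He : E → Finset V} {e f : E}
    (p : (hLineGraph He).Walk e f) :
    ∃ q : (incGraph He).Walk (Sum.inr e) (Sum.inr f),
      ∀ ed ∈ q.edges, ∃ (w : V) (g : E),
        ed = s(Sum.inl w, Sum.inr g) ∧ g ∈ p.support ∧ w ∈ He g := by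
  induction p with
  | nil => exact ⟨Walk.nil, by simp⟩
  | @cons a m c h p ih =>
    obtain ⟨q, hq⟩ := ih
    obtain ⟨hne, w, hw1, hw2⟩ := id h
    have adj1 : (incGraph He).Adj (Sum.inr a) (Sum.inl w) :=
      Or.inr ⟨w, a, rfl, rfl, hw1⟩
    have adj2 : (incGraph He).Adj (Sum.inl w) (Sum.inr m) :=
      Or.inl ⟨w, m, rfl, rfl, hw2⟩
    refine ⟨Walk.cons adj1 (Walk.cons adj2 q), ?_⟩
    intro ed hed
    rw [Walk.edges_cons, Walk.edges_cons, List.mem_cons, List.mem_cons] at hed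
    rcases hed with rfl | rfl | hed
    · exact ⟨w, a, Sym2.eq_swap, by simp, hw1⟩
    · exact ⟨w, m, rfl, by simp [Walk.start_mem_support], hw2⟩
    · obtain ⟨w', g, hedg, hg, hwg⟩ := hq ed hed
      exact ⟨w', g, hedg, by simp [hg], hwg⟩

/-- For a 3-hypergraph with 18-connected line graph of minimum degree
at least 52, the set of heavy vertices (black vertices incident with at least 18
hyperedges) is 18-edge-connected in the incidence graph. -/
theorem heavy_vertices_edgeConnected {V E : Type} [Fintype V] [Fintype E]
    (He : E → Finset V) (hrank : ∀ e, (He e).card ≤ 3)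
    (hconn : IsKConnected (hLineGraph He) 18)
    (hdeg : ∀ e, 52 ≤ ((hLineGraph He).neighborSet e).ncard) :
    EdgeConnectedIn (incGraph He)
      {x | ∃ v : V, x = Sum.inl v ∧ 18 ≤ {e | v ∈ He e}.ncard} 18 := by
  classical
  rintro s₁ ⟨u, rfl, hu⟩ s₂ ⟨v, rfl, hv⟩
  by_cases huv : u = v
  · subst huv
    refine ⟨fun _ => Walk.nil, fun i => Walk.IsPath.nil, ?_⟩
    intro i j _ ed hed
    simp [Walk.edges_nil] at hed
  -- choose fans of hyperedges at u and at v
  set L := hLineGraph He with hL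
  have hAex : ∃ A : Finset E, A.card = 18 ∧ ∀ e ∈ A, u ∈ He e := by
    obtain ⟨A, hsub, hcard⟩ := Finset.exists_subset_card_eq (s := {e | u ∈ He e}.toFinset) (n := 18)
      (by rw [← Set.ncard_eq_toFinset_card']; exact hu)
    exact ⟨A, hcard, fun e he => by simpa using hsub he⟩
  have hBex : ∃ B : Finset E, B.card = 18 ∧ ∀ e ∈ B, v ∈ He e := by
    obtain ⟨B, hsub, hcard⟩ := Finset.exists_subset_card_eq (s := {e | v ∈ He e}.toFinset) (n := 18)
      (by rw [← Set.ncard_eq_toFinset_card']; exact hv)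
    exact ⟨B, hcard, fun e he => by simpa using hsub he⟩
  obtain ⟨A, hAcard, hAmem⟩ := hAex
  obtain ⟨B, hBcard, hBmem⟩ := hBex
  -- every A–B separator in the line graph has at least 18 vertices
  have hsepL : ∀ S : Finset E, MSep L A B S → 18 ≤ S.card := by
    intro S hS
    by_contra hlt
    push_neg at hlt
    have hconn' : (L.induce ((↑S : Set E)ᶜ)).Connected :=
      hconn.2 (↑S) (by rwa [Set.ncard_coe_finset])
    have hAS : (A \ S).Nonempty := by
      apply Finset.card_pos.1
      have := Finset.card_le_card_sdiff_add_card (s := A) (t := S)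
      omega
    have hBS : (B \ S).Nonempty := by
      apply Finset.card_pos.1
      have := Finset.card_le_card_sdiff_add_card (s := B) (t := S)
      omega
    obtain ⟨a, ha⟩ := hAS
    obtain ⟨b, hb⟩ := hBS
    rw [Finset.mem_sdiff] at ha hb
    have haC : a ∈ ((↑S : Set E)ᶜ) := by simp [ha.2]
    have hbC : b ∈ ((↑S : Set E)ᶜ) := by simp [hb.2]
    obtain ⟨w⟩ := hconn'.preconnected ⟨a, haC⟩ ⟨b, hbC⟩
    obtain ⟨p, hp⟩ := induce_walk_out w
    obtain ⟨s, hsS, hsp⟩ := hS a ha.1 b hb.1 p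
    have := hp s hsp
    simp [hsS] at this
  -- Menger: 18 disjoint A–B paths in the line graph
  obtain ⟨a, b, P, haA, hbB, hPpath, hPdisj⟩ := menger' 18 L A B hsepL
  -- lift each to an incidence-graph path
  have key : ∀ i : Fin 18, ∃ W : (incGraph He).Walk (Sum.inl u) (Sum.inl v),
      W.IsPath ∧ ∀ ed ∈ W.edges, ∃ (w : V) (g : E),
        ed = s(Sum.inl w, Sum.inr g) ∧ g ∈ (P i).support := by
    intro i
    obtain ⟨q, hq⟩ := line_to_inc (P i)
    have adjU : (incGraph He).Adj (Sum.inl u) (Sum.inr (a i)) :=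
      Or.inl ⟨u, a i, rfl, rfl, hAmem _ (haA i)⟩
    have adjV : (incGraph He).Adj (Sum.inr (b i)) (Sum.inl v) :=
      Or.inr ⟨v, b i, rfl, rfl, hBmem _ (hbB i)⟩
    refine ⟨((Walk.cons adjU q).concat adjV).bypass, Walk.bypass_isPath _, ?_⟩
    intro ed hed
    have hed' := Walk.edges_bypass_subset _ hed
    rw [Walk.edges_concat, Walk.edges_cons, List.concat_eq_append, List.mem_append,
      List.mem_cons, List.mem_singleton] at hed'
    rcases hed' with (rfl | hed') | rfl
    · exact ⟨u, a i, rfl, Walk.start_mem_support _⟩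
    · obtain ⟨w, g, hedg, hg, _⟩ := hq ed hed'
      exact ⟨w, g, hedg, hg⟩
    · exact ⟨v, b i, Sym2.eq_swap, Walk.end_mem_support _⟩
  choose W hWpath hWed using key
  refine ⟨W, hWpath, ?_⟩
  intro i j hij ed hedi hedj
  obtain ⟨w1, g1, hed1, hg1⟩ := hWed i ed hedi
  obtain ⟨w2, g2, hed2, hg2⟩ := hWed j ed hedj
  have : g1 = g2 := by
    rw [hed1] at hed2
    rw [Sym2.eq_iff] at hed2
    rcases hed2 with ⟨h1, h2⟩ | ⟨h1, h2⟩
    · exact Sum.inr.inj h2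
    · exact absurd h1 (by simp)
  exact hPdisj i j hij g1 hg1 (this ▸ hg2)
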